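/- The permutation group G = ⟨(1 2)(3 4), (1 3)(2 4), (1 2)(5 6)⟩ on {1,...,6} has order 8, is isomorphic to the dihedral group of order 8, every involution in G moves exactly four letters (fixes exactly two points), and |G| = 8 does not divide (6 − f₁)···(6 − f_r) when f₁,...,f_r are the distinct fixed-point numbers of elements of prime order only. -/

import Mathlib

open MulAction

abbrev pa' : Equiv.Perm (Fin 6) := Equiv.swap 0 1 * Equiv.swap 2 3
abbrev pb' : Equiv.Perm (Fin 6) := Equiv.swap 0 2 * Equiv.swap 1 3
abbrev pc' : Equiv.Perm (Fin 6) := Equiv.swap 0 1 * Equiv.swap 4 5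
abbrev pR' : Equiv.Perm (Fin 6) := pb' * pc'

def Hprop (x : Equiv.Perm (Fin 6)) : Prop :=
  x = 1 ∨ x = pR' ∨ x = pR'*pR' ∨ x = pR'*pR'*pR' ∨
    x = pc' ∨ x = pc'*pR' ∨ x = pc'*(pR'*pR') ∨ x = pc'*(pR'*pR'*pR')

instance Hprop.dec : DecidablePred Hprop := fun x => by unfold Hprop; infer_instance

def H' : Subgroup (Equiv.Perm (Fin 6)) where
  carrier := {x | Hprop x}
  one_mem' := Or.inl rfl
  mul_mem' := by
    intro x y hx hy
    rcases hx with rfl|rfl|rfl|rfl|rfl|rfl|rfl|rfl <;>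
      rcases hy with rfl|rfl|rfl|rfl|rfl|rfl|rfl|rfl <;>
      · show Hprop _
        decide
  inv_mem' := by
    intro x hx
    rcases hx with rfl|rfl|rfl|rfl|rfl|rfl|rfl|rfl <;>
      · show Hprop _
        decide

theorem closure_eq_H' : Subgroup.closure
      ({ Equiv.swap 0 1 * Equiv.swap 2 3,
        Equiv.swap 0 2 * Equiv.swap 1 3,
        Equiv.swap 0 1 * Equiv.swap 4 5 } : Set (Equiv.Perm (Fin 6))) = H' := by
  apply le_antisymm
  · rw [Subgroup.closure_le]
    intro x hx
    rcases hx with rfl|rfl|rfl <;> · show Hprop _; decide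
  · intro x hx
    have hb : Equiv.swap 0 2 * Equiv.swap 1 3 ∈ Subgroup.closure
        ({ Equiv.swap 0 1 * Equiv.swap 2 3,
          Equiv.swap 0 2 * Equiv.swap 1 3,
          Equiv.swap 0 1 * Equiv.swap 4 5 } : Set (Equiv.Perm (Fin 6))) :=
      Subgroup.subset_closure (Set.mem_insert_of_mem _ (Set.mem_insert _ _))
    have hc : Equiv.swap 0 1 * Equiv.swap 4 5 ∈ Subgroup.closure
        ({ Equiv.swap 0 1 * Equiv.swap 2 3,
          Equiv.swap 0 2 * Equiv.swap 1 3,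
          Equiv.swap 0 1 * Equiv.swap 4 5 } : Set (Equiv.Perm (Fin 6))) :=
      Subgroup.subset_closure (Set.mem_insert_of_mem _ (Set.mem_insert_of_mem _ rfl))
    have hr := mul_mem hb hc
    rcases hx with rfl|rfl|rfl|rfl|rfl|rfl|rfl|rfl
    · exact one_mem _
    · exact hr
    · exact mul_mem hr hr
    · exact mul_mem (mul_mem hr hr) hr
    · exact hc
    · exact mul_mem hc hr
    · exact mul_mem hc (mul_mem hr hr)
    · exact mul_mem hc (mul_mem (mul_mem hr hr) hr)

def rp' (i : ZMod 4) : Equiv.Perm (Fin 6) :=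
  if i = 0 then 1 else if i = 1 then pR' else if i = 2 then pR'*pR' else pR'*pR'*pR'

def dmap : DihedralGroup 4 → Equiv.Perm (Fin 6)
  | .r i => rp' i
  | .sr i => pc' * rp' i

lemma dmap_mul : ∀ x y : DihedralGroup 4, dmap (x*y) = dmap x * dmap y := by decide

lemma dmap_mem : ∀ x : DihedralGroup 4, Hprop (dmap x) := by decide

lemma dmap_inj : ∀ x y : DihedralGroup 4, dmap x = dmap y → x = y := by decide

def dhom : DihedralGroup 4 →* H' where
  toFun x := ⟨dmap x, dmap_mem x⟩
  map_one' := Subtype.ext (by decide)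
  map_mul' x y := Subtype.ext (dmap_mul x y)

lemma dhom_bij : Function.Bijective dhom := by
  constructor
  · intro x y h
    exact dmap_inj x y (congrArg Subtype.val h)
  · rintro ⟨x, hx⟩
    rcases hx with rfl|rfl|rfl|rfl|rfl|rfl|rfl|rfl
    · exact ⟨.r 0, Subtype.ext (by decide)⟩
    · exact ⟨.r 1, Subtype.ext (by decide)⟩
    · exact ⟨.r 2, Subtype.ext (by decide)⟩
    · exact ⟨.r 3, Subtype.ext (by decide)⟩
    · exact ⟨.sr 0, Subtype.ext (by decide)⟩
    · exact ⟨.sr 1, Subtype.ext (by decide)⟩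
    · exact ⟨.sr 2, Subtype.ext (by decide)⟩
    · exact ⟨.sr 3, Subtype.ext (by decide)⟩

noncomputable def dequiv : DihedralGroup 4 ≃* H' := MulEquiv.ofBijective dhom dhom_bij

instance fixedBy.dec (g : Equiv.Perm (Fin 6)) : DecidablePred (· ∈ fixedBy (Fin 6) g) :=
  fun x => decidable_of_iff (g x = x) Iff.rfl

lemma fixcard (g : Equiv.Perm (Fin 6)) :
    Nat.card (fixedBy (Fin 6) g) = (Finset.univ.filter fun x => g x = x).card := by
  rw [Nat.card_eq_fintype_card]
  exact Fintype.card_of_subtype _ (fun x => by simp [fixedBy, Equiv.Perm.smul_def])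

set_option maxRecDepth 4000 in
lemma not_prime_order_pR' (h : (orderOf pR').Prime) : False := by
  have h4 : pR' ^ 4 = 1 := by decide
  have hdvd : orderOf pR' ∣ 4 := orderOf_dvd_of_pow_eq_one h4
  have h2 : orderOf pR' = 2 := by
    have : orderOf pR' ∣ 2 ^ 2 := by simpa using hdvd
    have := (Nat.prime_dvd_prime_iff_eq h Nat.prime_two).mp (h.dvd_of_dvd_pow this)
    exact this
  have := pow_orderOf_eq_one pR'
  rw [h2] at this
  exact absurd this (by decide)

set_option maxRecDepth 4000 in
lemma not_prime_order_pR'3 (h : (orderOf (pR'*pR'*pR')).Prime) : False := by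
  have h4 : (pR'*pR'*pR') ^ 4 = 1 := by decide
  have hdvd : orderOf (pR'*pR'*pR') ∣ 4 := orderOf_dvd_of_pow_eq_one h4
  have h2 : orderOf (pR'*pR'*pR') = 2 := by
    have : orderOf (pR'*pR'*pR') ∣ 2 ^ 2 := by simpa using hdvd
    have := (Nat.prime_dvd_prime_iff_eq h Nat.prime_two).mp (h.dvd_of_dvd_pow this)
    exact this
  have := pow_orderOf_eq_one (pR'*pR'*pR')
  rw [h2] at this
  exact absurd this (by decide)

/-- The subgroup `G = ⟨(1 2)(3 4), (1 3)(2 4), (1 2)(5 6)⟩` of `S₆` (on `Fin 6`,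
with letters `0,…,5`) has order 8, is isomorphic to the dihedral group of order 8,
every involution in it fixes exactly two of the six letters, and `|G| = 8` does
*not* divide `∏ (6 - fᵢ)` where the `fᵢ` are the distinct fixed-point numbers of
elements of prime order. -/
theorem blichfeldt_fails_for_prime_order
    (G : Subgroup (Equiv.Perm (Fin 6)))
    (hG : G = Subgroup.closure
      { Equiv.swap 0 1 * Equiv.swap 2 3,
        Equiv.swap 0 2 * Equiv.swap 1 3,
        Equiv.swap 0 1 * Equiv.swap 4 5 })
    (F : Finset ℕ)
    (hF : ∀ m : ℕ, m ∈ F ↔ ∃ g ∈ G, (orderOf g).Prime ∧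
      Nat.card (fixedBy (Fin 6) g) = m) :
    Nat.card G = 8 ∧ Nonempty (G ≃* DihedralGroup 4) ∧
      (∀ g ∈ G, orderOf g = 2 → Nat.card (fixedBy (Fin 6) g) = 2) ∧
      ¬ Nat.card G ∣ ∏ m ∈ F, (6 - m) := by
  have hGH : G = H' := by rw [hG]; exact closure_eq_H'
  have hcard : Nat.card G = 8 := by
    rw [hGH, ← Nat.card_congr dequiv.toEquiv, Nat.card_eq_fintype_card, DihedralGroup.card]
  refine ⟨hcard, ⟨hGH ▸ dequiv.symm⟩, ?_, ?_⟩
  · intro g hg h2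
    rw [hGH] at hg
    rcases hg with rfl|rfl|rfl|rfl|rfl|rfl|rfl|rfl
    · rw [orderOf_one] at h2; exact absurd h2 (by decide)
    · exact absurd (h2 ▸ Nat.prime_two) (fun h => not_prime_order_pR' h)
    · rw [fixcard]; decide
    · exact absurd (h2 ▸ Nat.prime_two) (fun h => not_prime_order_pR'3 h)
    · rw [fixcard]; decide
    · rw [fixcard]; decide
    · rw [fixcard]; decide
    · rw [fixcard]; decide
  · have hF2 : F = {2} := by
      ext m
      rw [hF, Finset.mem_singleton]
      constructor
      · rintro ⟨g, hg, hp, hfix⟩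
        rw [hGH] at hg
        rcases hg with rfl|rfl|rfl|rfl|rfl|rfl|rfl|rfl
        · rw [orderOf_one] at hp; exact absurd hp (by decide)
        · exact absurd hp not_prime_order_pR'
        · rw [fixcard] at hfix; rw [← hfix]; decide
        · exact absurd hp not_prime_order_pR'3
        · rw [fixcard] at hfix; rw [← hfix]; decide
        · rw [fixcard] at hfix; rw [← hfix]; decide
        · rw [fixcard] at hfix; rw [← hfix]; decide
        · rw [fixcard] at hfix; rw [← hfix]; decide
      · rintro rfl
        refine ⟨pc', ?_, ?_, by rw [fixcard]; decide⟩
        · rw [hGH]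
          show Hprop _
          decide
        · rw [orderOf_eq_prime (by decide : pc' ^ 2 = 1) (by decide)]
          exact Nat.prime_two
    rw [hF2, hcard]
    decide
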